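/- arXiv:1304.0269 — 5 statements merged into one kernel-verified Lean document; each statement's English description precedes it below -/
import Mathlib

section
/- For 0<q<1 and any nonnegative integer s, ζ_q^*[{2}^s, 1] = ∑_{k=1}^∞ ((1+q^k)/[k]_q^{2s+1}) q^{k^2 + sk}. -/
open Finset

/-- q-analogue of a natural number: [m]_q = (1-q^m)/(1-q). -/
noncomputable def qnum (q : ℝ) (m : ℕ) : ℝ := (1 - q ^ m) / (1 - q)

/-- q-Pochhammer (q;q)_n = ∏_{k=0}^{n-1} (1 - q^{k+1}). -/
noncomputable def qPoch (q : ℝ) (n : ℕ) : ℝ := ∏ k ∈ Finset.range n, (1 - q ^ (k + 1))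

/-- Gaussian q-binomial coefficient, 0 when m > n. -/
noncomputable def qbinom (q : ℝ) (n m : ℕ) : ℝ :=
  if m ≤ n then qPoch q n / (qPoch q m * qPoch q (n - m)) else 0

/-- q-multiple harmonic star sum H_n^*[s₁,…,s_m]. -/
noncomputable def qHstar (q : ℝ) : List ℕ → ℕ → ℝ
  | [], _ => 1
  | s :: rest, n => ∑ k ∈ Finset.Icc 1 n, q ^ k / qnum q k ^ s * qHstar q rest k

/-- q-multiple zeta star value ζ_q^*[s₁,…,s_m]. -/
noncomputable def qZetaStar (q : ℝ) : List ℕ → ℝ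
  | [] => 1
  | s :: rest => ∑' k : ℕ, q ^ (k + 1) / qnum q (k + 1) ^ s * qHstar q rest (k + 1)

/-- strict multiple harmonic sum ∑_{n ≥ k₁ > … > k_r ≥ 1} ∏ 1/k_j^{p_j}. -/
noncomputable def Hstrict : List ℕ → ℕ → ℝ
  | [], _ => 1
  | p :: rest, n => ∑ k ∈ Finset.Icc 1 n, (1 : ℝ) / (k : ℝ) ^ p * Hstrict rest (k - 1)

/-- binomial-weighted strict multiple harmonic sum Ĥ_n(p). -/
noncomputable def Hhat : List ℕ → ℕ → ℝ
  | [], _ => 1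
  | p :: rest, n => ∑ k ∈ Finset.Icc 1 n,
      ((n.choose k : ℝ) / ((n + k).choose n)) * ((1 : ℝ) / (k : ℝ) ^ p) * Hstrict rest (k - 1)

/-- ordinary multiple harmonic star sum H_n^*(s₁,…,s_m). -/
noncomputable def HstarO : List ℕ → ℕ → ℝ
  | [], _ => 1
  | s :: rest, n => ∑ k ∈ Finset.Icc 1 n, (1 : ℝ) / (k : ℝ) ^ s * HstarO rest k

/-- ordinary multiple zeta star value. -/
noncomputable def zetaStarO : List ℕ → ℝ
  | [] => 1
  | s :: rest => ∑' k : ℕ, (1 : ℝ) / ((k : ℝ) + 1) ^ s * HstarO rest (k + 1)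

/-- Merge a list of parts according to a comma(true)/plus(false) pattern. -/
def mergeComp : ℕ → List ℕ → List Bool → List ℕ
  | a, [], _ => [a]
  | a, _ :: _, [] => [a]
  | a, b :: t, true :: bs => a :: mergeComp b t bs
  | a, b :: t, false :: bs => mergeComp (a + b) t bs

noncomputable def AA (q : ℝ) (n k : ℕ) : ℝ :=
  if k ≤ n then (∏ j ∈ Finset.range k, (1 - q ^ (n - k + 1 + j)))
      / (∏ j ∈ Finset.range k, (1 - q ^ (n + 1 + j))) else 0

lemma qpow_congr (q : ℝ) {a b : ℕ} (h : a = b) : 1 - q ^ a = 1 - q ^ b := by rw [h]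

section basics
variable {q : ℝ}

lemma one_sub_pow_pos (hq0 : 0 < q) (hq1 : q < 1) (m : ℕ) (hm : 1 ≤ m) : 0 < 1 - q ^ m := by
  have : q ^ m < 1 := pow_lt_one₀ hq0.le hq1 (by omega)
  linarith

lemma one_sub_pow_le_one (hq0 : 0 < q) (m : ℕ) : 1 - q ^ m ≤ 1 := by
  have : 0 ≤ q ^ m := pow_nonneg hq0.le m
  linarith

lemma qnum_pos (hq0 : 0 < q) (hq1 : q < 1) (m : ℕ) (hm : 1 ≤ m) : 0 < qnum q m :=
  div_pos (one_sub_pow_pos hq0 hq1 m hm) (by linarith)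

lemma qnum_ge_one (hq0 : 0 < q) (hq1 : q < 1) (m : ℕ) (hm : 1 ≤ m) : 1 ≤ qnum q m := by
  rw [qnum, le_div_iff₀ (by linarith)]
  have : q ^ m ≤ q ^ 1 := pow_le_pow_of_le_one hq0.le hq1.le hm
  simpa using by linarith

lemma num_pos (hq0 : 0 < q) (hq1 : q < 1) (n k : ℕ) :
    0 < ∏ j ∈ Finset.range k, (1 - q ^ (n - k + 1 + j)) :=
  Finset.prod_pos fun j _ => one_sub_pow_pos hq0 hq1 _ (by omega)

lemma den_pos (hq0 : 0 < q) (hq1 : q < 1) (n k : ℕ) :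
    0 < ∏ j ∈ Finset.range k, (1 - q ^ (n + 1 + j)) :=
  Finset.prod_pos fun j _ => one_sub_pow_pos hq0 hq1 _ (by omega)

lemma AA_nonneg (hq0 : 0 < q) (hq1 : q < 1) (n k : ℕ) : 0 ≤ AA q n k := by
  rw [AA]; split
  · exact le_of_lt (div_pos (num_pos hq0 hq1 n k) (den_pos hq0 hq1 n k))
  · exact le_rfl

lemma AA_le_one (hq0 : 0 < q) (hq1 : q < 1) (n k : ℕ) : AA q n k ≤ 1 := by
  rw [AA]; split
  · rw [div_le_one (den_pos hq0 hq1 n k)]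
    refine Finset.prod_le_prod (fun j _ => le_of_lt (one_sub_pow_pos hq0 hq1 _ (by omega)))
      (fun j _ => ?_)
    have : q ^ (n + 1 + j) ≤ q ^ (n - k + 1 + j) :=
      pow_le_pow_of_le_one hq0.le hq1.le (by omega)
    linarith
  · norm_num

lemma AA_of_gt {n k : ℕ} (h : n < k) : AA q n k = 0 := by
  rw [AA, if_neg (by omega)]

lemma AA_zero (n : ℕ) : AA q n 0 = 1 := by simp [AA]

lemma AA_one {n : ℕ} (hn : 1 ≤ n) : AA q n 1 = (1 - q ^ n) / (1 - q ^ (n + 1)) := by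
  rw [AA, if_pos hn]
  congr 1
  · rw [Finset.prod_range_one]; exact qpow_congr q (by omega)
  · rw [Finset.prod_range_one]

/-- ratio recurrence in k -/
lemma AA_R2 (hq0 : 0 < q) (hq1 : q < 1) {n k : ℕ} (hk : k < n) :
    AA q n (k + 1) * (1 - q ^ (n + 1 + k)) = AA q n k * (1 - q ^ (n - k)) := by
  rw [AA, AA, if_pos (by omega), if_pos (by omega)]
  have hnum : (∏ j ∈ Finset.range (k+1), (1 - q ^ (n - (k+1) + 1 + j)))
      = (∏ j ∈ Finset.range k, (1 - q ^ (n - k + 1 + j))) * (1 - q ^ (n - k)) := by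
    rw [Finset.prod_range_succ']
    congr 1
    · exact Finset.prod_congr rfl fun j _ => qpow_congr q (by omega)
    · exact qpow_congr q (by omega)
  have hden : (∏ j ∈ Finset.range (k+1), (1 - q ^ (n + 1 + j)))
      = (∏ j ∈ Finset.range k, (1 - q ^ (n + 1 + j))) * (1 - q ^ (n + 1 + k)) := by
    rw [Finset.prod_range_succ]
  rw [hnum, hden]
  have h1 := (den_pos hq0 hq1 n k).ne'
  have h2 := (one_sub_pow_pos hq0 hq1 (n + 1 + k) (by omega)).ne'
  field_simp

/-- ratio recurrence in n -/
lemma AA_R1 (hq0 : 0 < q) (hq1 : q < 1) {n k : ℕ} (hk1 : 1 ≤ k) (hk : k ≤ n + 1) :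
    AA q n k * (1 - q ^ (n + 1)) ^ 2
      = AA q (n + 1) k * ((1 - q ^ (n + 1 - k)) * (1 - q ^ (n + 1 + k))) := by
  rcases eq_or_lt_of_le hk with h | hlt
  · subst h
    rw [AA_of_gt (by omega), Nat.sub_self]
    simp
  · have hkn : k ≤ n := by omega
    rw [AA, AA, if_pos hkn, if_pos (by omega)]
    have hnum : (∏ j ∈ Finset.range k, (1 - q ^ (n + 1 - k + 1 + j))) * (1 - q ^ (n + 1 - k))
        = (∏ j ∈ Finset.range k, (1 - q ^ (n - k + 1 + j))) * (1 - q ^ (n + 1)) := by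
      have e1 : (∏ j ∈ Finset.range (k+1), (1 - q ^ (n + 1 - k + j)))
          = (∏ j ∈ Finset.range k, (1 - q ^ (n + 1 - k + 1 + j))) * (1 - q ^ (n + 1 - k)) := by
        rw [Finset.prod_range_succ']
        have h1 : (∏ j ∈ Finset.range k, (1 - q ^ (n + 1 - k + (j + 1))))
            = ∏ j ∈ Finset.range k, (1 - q ^ (n + 1 - k + 1 + j)) :=
          Finset.prod_congr rfl fun j _ => qpow_congr q (by omega)
        have h2 : (1:ℝ) - q ^ (n + 1 - k + 0) = 1 - q ^ (n + 1 - k) := qpow_congr q (by omega)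
        rw [h1, h2]
      have e2 : (∏ j ∈ Finset.range (k+1), (1 - q ^ (n + 1 - k + j)))
          = (∏ j ∈ Finset.range k, (1 - q ^ (n - k + 1 + j))) * (1 - q ^ (n + 1)) := by
        rw [Finset.prod_range_succ]
        have h1 : (∏ j ∈ Finset.range k, (1 - q ^ (n + 1 - k + j)))
            = ∏ j ∈ Finset.range k, (1 - q ^ (n - k + 1 + j)) :=
          Finset.prod_congr rfl fun j _ => qpow_congr q (by omega)
        have h2 : (1:ℝ) - q ^ (n + 1 - k + k) = 1 - q ^ (n + 1) := qpow_congr q (by omega)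
        rw [h1, h2]
      rw [← e1, e2]
    have hden : (∏ j ∈ Finset.range k, (1 - q ^ (n + 1 + j))) * (1 - q ^ (n + 1 + k))
        = (1 - q ^ (n + 1)) * ∏ j ∈ Finset.range k, (1 - q ^ (n + 1 + 1 + j)) := by
      have e1 : (∏ j ∈ Finset.range (k+1), (1 - q ^ (n + 1 + j)))
          = (∏ j ∈ Finset.range k, (1 - q ^ (n + 1 + j))) * (1 - q ^ (n + 1 + k)) :=
        Finset.prod_range_succ _ _
      have e2 : (∏ j ∈ Finset.range (k+1), (1 - q ^ (n + 1 + j)))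
          = (∏ j ∈ Finset.range k, (1 - q ^ (n + 1 + 1 + j))) * (1 - q ^ (n + 1)) := by
        rw [Finset.prod_range_succ']
        have h1 : (∏ j ∈ Finset.range k, (1 - q ^ (n + 1 + (j + 1))))
            = ∏ j ∈ Finset.range k, (1 - q ^ (n + 1 + 1 + j)) :=
          Finset.prod_congr rfl fun j _ => qpow_congr q (by omega)
        have h2 : (1:ℝ) - q ^ (n + 1 + 0) = 1 - q ^ (n + 1) := qpow_congr q (by omega)
        rw [h1, h2]
      rw [← e1, e2]; ring
    have hd1 := (den_pos hq0 hq1 n k).ne'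
    have hd2 : (∏ j ∈ Finset.range k, (1 - q ^ (n + 1 + 1 + j))) ≠ 0 :=
      (den_pos hq0 hq1 (n+1) k).ne'
    rw [div_mul_eq_mul_div, div_mul_eq_mul_div, div_eq_div_iff hd1 hd2]
    linear_combination (-(1 - q ^ (n + 1 + k)) * ∏ j ∈ Finset.range k, (1 - q ^ (n + 1 + j))) * hnum
      + (-(∏ j ∈ Finset.range k, (1 - q ^ (n - k + 1 + j))) * (1 - q ^ (n + 1))) * hden
end basics

section telescope
variable {q : ℝ}

lemma sum_Icc_one_eq {M : Type*} [AddCommMonoid M] (f : ℕ → M) (n : ℕ) :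
    ∑ k ∈ Finset.Icc 1 n, f k = ∑ i ∈ Finset.range n, f (i + 1) := by
  rw [← Finset.Ico_add_one_right_eq_Icc, Finset.sum_Ico_eq_sum_range]
  exact Finset.sum_congr (by norm_num) fun i _ => by rw [add_comm]

/-- difference relation -/
lemma AA_D (hq0 : 0 < q) (hq1 : q < 1) {n k : ℕ} (hk1 : 1 ≤ k) (hk : k ≤ n + 1) :
    q ^ k * ((AA q (n+1) k - AA q n k) * (1 - q ^ (n+1)) ^ 2)
      = q ^ (n+1) * (AA q (n+1) k * (1 - q ^ k) ^ 2) := by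
  have hR1 := AA_R1 hq0 hq1 hk1 hk
  obtain ⟨d, hd⟩ : ∃ d, n + 1 = k + d := ⟨n + 1 - k, by omega⟩
  rw [show n + 1 - k = d from by omega] at hR1
  rw [hd] at hR1 ⊢
  linear_combination (-(q ^ k)) * hR1

/-- key telescoping identity (B') -/
lemma Bprime (hq0 : 0 < q) (hq1 : q < 1) (n : ℕ) :
    ∑ k ∈ Finset.Icc 1 n, AA q n k * ((1 - q ^ (2*k)) * q ^ (k*(k-1))) = 1 - q ^ n := by
  rcases Nat.eq_zero_or_pos n with rfl | hn
  · simp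
  set G : ℕ → ℝ := fun m => AA q n m * (q ^ (m*(m-1)) * (1 - q ^ (n+m))) with hG
  have hterm : ∀ k, 1 ≤ k → k ≤ n →
      AA q n k * ((1 - q ^ (2*k)) * q ^ (k*(k-1))) = G k - G (k+1) := by
    intro k hk1 hkn
    rcases eq_or_lt_of_le hkn with h | hlt
    · subst h
      have : G (k+1) = 0 := by
        simp only [hG]
        rw [AA_of_gt (Nat.lt_succ_self k)]
        ring
      rw [this, hG]
      obtain ⟨e, rfl⟩ : ∃ e, k = e + 1 := ⟨k - 1, by omega⟩
      simp only [Nat.add_sub_cancel]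
      ring
    · have hR2 := AA_R2 hq0 hq1 hlt
      have hGk1 : G (k+1) = AA q n (k+1) * (q ^ ((k+1)*k) * (1 - q ^ (n+1+k))) := by
        simp only [hG, Nat.add_sub_cancel]
        rw [show (1:ℝ) - q ^ (n + (k+1)) = 1 - q ^ (n+1+k) from qpow_congr q (by omega)]
      rw [hGk1, hG]
      obtain ⟨e, rfl⟩ : ∃ e, k = e + 1 := ⟨k - 1, by omega⟩
      obtain ⟨d, hd⟩ : ∃ d, n = (e+1) + d := ⟨n - (e+1), by omega⟩
      rw [show n - (e+1) = d from by omega] at hR2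
      rw [hd] at hR2 ⊢
      simp only [Nat.add_sub_cancel]
      linear_combination (q ^ ((e+1+1)*(e+1))) * hR2
  rw [Finset.sum_congr rfl fun k hk => hterm k (Finset.mem_Icc.mp hk).1 (Finset.mem_Icc.mp hk).2]
  rw [sum_Icc_one_eq (fun k => G k - G (k+1)) n]
  rw [Finset.sum_range_sub' (fun i => G (i+1)) n]
  have hGn : G (n+1) = 0 := by
    simp only [hG]
    rw [AA_of_gt (Nat.lt_succ_self n)]
    ring
  have hG1 : G 1 = 1 - q ^ n := by
    rw [hG]
    simp only [mul_one, Nat.sub_self, mul_zero, pow_zero, one_mul]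
    rw [AA_one hn]
    rw [div_mul_cancel₀]
    exact (one_sub_pow_pos hq0 hq1 (n+1) (by omega)).ne'
  rw [hGn, hG1, sub_zero]

/-- telescoped tail sum (T) -/
lemma Tsum (hq0 : 0 < q) (hq1 : q < 1) (k : ℕ) (hk1 : 1 ≤ k) :
    ∀ n, k ≤ n → ∑ m ∈ Finset.Icc k n, q ^ m * AA q m k / qnum q m ^ 2
      = q ^ k * AA q n k / qnum q k ^ 2 := by
  intro n hn
  induction n, hn using Nat.le_induction with
  | base => rw [Finset.Icc_self, Finset.sum_singleton]
  | succ n hn ih =>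
      rw [Finset.sum_Icc_succ_top (by omega), ih]
      have hD := AA_D hq0 hq1 hk1 (by omega : k ≤ n + 1)
      have h1q : ((1:ℝ) - q) ^ 2 ≠ 0 := pow_ne_zero 2 (by linarith)
      have hkq : qnum q k ^ 2 ≠ 0 := pow_ne_zero 2 (qnum_pos hq0 hq1 k hk1).ne'
      have hnq : qnum q (n+1) ^ 2 ≠ 0 := pow_ne_zero 2 (qnum_pos hq0 hq1 (n+1) (by omega)).ne'
      have key : q ^ (n+1) * AA q (n+1) k / qnum q (n+1) ^ 2
          = (q ^ k * AA q (n+1) k - q ^ k * AA q n k) / qnum q k ^ 2 := by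
        rw [div_eq_div_iff hnq hkq, qnum, qnum, div_pow, div_pow,
          mul_div_assoc', mul_div_assoc', div_eq_div_iff h1q h1q]
        linear_combination (-((1-q)^2)) * hD
      rw [key]
      ring
end telescope

noncomputable def cterm (q : ℝ) (s k : ℕ) : ℝ :=
  (1 + q ^ k) * q ^ (k ^ 2 + s * k) / qnum q k ^ (2 * s + 1)

section finid
variable {q : ℝ}

lemma sum_Icc_swap {M : Type*} [AddCommMonoid M] (g : ℕ → ℕ → M) (n : ℕ) :
    ∑ m ∈ Finset.Icc 1 n, ∑ k ∈ Finset.Icc 1 m, g m k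
      = ∑ k ∈ Finset.Icc 1 n, ∑ m ∈ Finset.Icc k n, g m k := by
  have h := Finset.sum_Ico_Ico_comm 1 (n + 1) (fun k m => g m k)
  simp only [← Finset.Ico_add_one_right_eq_Icc]
  rw [← h]

/-- base case of the finite identity -/
lemma F0 (hq0 : 0 < q) (hq1 : q < 1) (n : ℕ) :
    ∑ k ∈ Finset.Icc 1 n, q ^ k / qnum q k
      = ∑ k ∈ Finset.Icc 1 n, AA q n k * cterm q 0 k := by
  induction n with
  | zero => simp
  | succ n ih =>
    have h1q : (1:ℝ) - q ≠ 0 := by linarith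
    have hn2 : ((1:ℝ) - q ^ (n+1)) ^ 2 ≠ 0 :=
      pow_ne_zero 2 (one_sub_pow_pos hq0 hq1 (n+1) (by omega)).ne'
    have hext : ∑ k ∈ Finset.Icc 1 n, AA q n k * cterm q 0 k
        = ∑ k ∈ Finset.Icc 1 (n+1), AA q n k * cterm q 0 k := by
      rw [Finset.sum_Icc_succ_top (by omega : 1 ≤ n + 1), AA_of_gt (Nat.lt_succ_self n)]
      ring
    rw [Finset.sum_Icc_succ_top (by omega : 1 ≤ n + 1), ih, hext]
    have hdiff : ∀ k ∈ Finset.Icc 1 (n+1),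
        AA q (n+1) k * cterm q 0 k - AA q n k * cterm q 0 k
          = ((1-q) * q ^ (n+1) / (1 - q ^ (n+1)) ^ 2)
              * (AA q (n+1) k * ((1 - q ^ (2*k)) * q ^ (k*(k-1)))) := by
      intro k hk
      obtain ⟨hk1, hkn⟩ := Finset.mem_Icc.mp hk
      have hD := AA_D hq0 hq1 hk1 hkn
      have hk0 : (1:ℝ) - q ^ k ≠ 0 := (one_sub_pow_pos hq0 hq1 k hk1).ne'
      rw [cterm, qnum]
      rw [show 2*0+1 = 1 by norm_num, pow_one, show k^2 + 0*k = k^2 by ring]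
      rw [div_div_eq_mul_div, ← sub_mul, mul_div_assoc', div_mul_eq_mul_div,
        div_eq_div_iff hk0 hn2]
      obtain ⟨e, rfl⟩ : ∃ e, k = e + 1 := ⟨k - 1, by omega⟩
      simp only [Nat.add_sub_cancel]
      linear_combination ((1 + q^(e+1)) * q^((e+1)*e) * (1-q)) * hD
    have : ∑ k ∈ Finset.Icc 1 (n+1), AA q (n+1) k * cterm q 0 k
          - ∑ k ∈ Finset.Icc 1 (n+1), AA q n k * cterm q 0 k
        = q ^ (n+1) / qnum q (n+1) := by
      rw [← Finset.sum_sub_distrib, Finset.sum_congr rfl hdiff, ← Finset.mul_sum,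
        Bprime hq0 hq1 (n+1), qnum]
      have hn1 : ((1:ℝ) - q ^ (n+1)) ≠ 0 := (one_sub_pow_pos hq0 hq1 (n+1) (by omega)).ne'
      field_simp
    linarith [this]
end finid

lemma Ffin (hq0 : 0 < (q:ℝ)) (hq1 : q < 1) :
    ∀ s n, qHstar q (List.replicate s 2 ++ [1]) n
      = ∑ k ∈ Finset.Icc 1 n, AA q n k * cterm q s k := by
  intro s
  induction s with
  | zero =>
    intro n
    simp only [List.replicate, List.nil_append]
    rw [qHstar]
    simp only [qHstar, pow_one, mul_one]
    exact F0 hq0 hq1 n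
  | succ s ih =>
    intro n
    have hrep : List.replicate (s+1) 2 ++ [1] = 2 :: (List.replicate s 2 ++ [1]) := by
      simp [List.replicate_succ]
    rw [hrep, qHstar]
    have step1 : ∀ m ∈ Finset.Icc 1 n,
        q ^ m / qnum q m ^ 2 * qHstar q (List.replicate s 2 ++ [1]) m
          = ∑ k ∈ Finset.Icc 1 m, (q ^ m * AA q m k / qnum q m ^ 2) * cterm q s k := by
      intro m _
      rw [ih m, Finset.mul_sum]
      exact Finset.sum_congr rfl fun k _ => by ring
    rw [Finset.sum_congr rfl step1, sum_Icc_swap]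
    refine Finset.sum_congr rfl fun k hk => ?_
    obtain ⟨hk1, hkn⟩ := Finset.mem_Icc.mp hk
    have hinner : ∑ m ∈ Finset.Icc k n, (q ^ m * AA q m k / qnum q m ^ 2) * cterm q s k
        = (∑ m ∈ Finset.Icc k n, q ^ m * AA q m k / qnum q m ^ 2) * cterm q s k := by
      rw [Finset.sum_mul]
    rw [hinner, Tsum hq0 hq1 k hk1 n hkn]
    -- now: (q^k * AA q n k / qnum q k ^ 2) * cterm q s k = AA q n k * cterm q (s+1) k
    rw [cterm, cterm]
    have hkq : qnum q k ≠ 0 := (qnum_pos hq0 hq1 k hk1).ne'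
    have e1 : k ^ 2 + (s+1) * k = (k ^ 2 + s * k) + k := by ring
    have e2 : 2 * (s+1) + 1 = (2 * s + 1) + 2 := by ring
    rw [e1, e2, pow_add, pow_add]
    field_simp
    ring

section limits
variable {q : ℝ}

lemma qHstar_nonneg (hq0 : 0 < q) (hq1 : q < 1) :
    ∀ (l : List ℕ) (n : ℕ), 0 ≤ qHstar q l n := by
  intro l
  induction l with
  | nil => intro n; rw [qHstar]; norm_num
  | cons a l ih =>
    intro n
    rw [qHstar]
    refine Finset.sum_nonneg fun k hk => ?_
    have hk1 := (Finset.mem_Icc.mp hk).1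
    exact mul_nonneg (div_nonneg (pow_nonneg hq0.le _)
      (pow_nonneg (qnum_pos hq0 hq1 k hk1).le _)) (ih k)

lemma sum_Icc_pow_le (hq0 : 0 < q) (hq1 : q < 1) (n : ℕ) :
    ∑ k ∈ Finset.Icc 1 n, q ^ k ≤ q / (1 - q) := by
  have h1q : (0:ℝ) < 1 - q := by linarith
  rw [sum_Icc_one_eq (fun k => q ^ k) n]
  have : ∑ i ∈ Finset.range n, q ^ (i + 1) = q * ∑ i ∈ Finset.range n, q ^ i := by
    rw [Finset.mul_sum]
    exact Finset.sum_congr rfl fun i _ => by ring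
  rw [this, geom_sum_eq (by linarith : q ≠ 1) n]
  have e : (q ^ n - 1) / (q - 1) = (1 - q ^ n) / (1 - q) := by
    rw [div_eq_div_iff (by linarith) (by linarith)]
    ring
  rw [e, mul_div_assoc']
  rw [div_le_div_iff₀ h1q h1q]
  nlinarith [mul_nonneg (mul_nonneg hq0.le h1q.le) (pow_nonneg hq0.le n)]

lemma qHstar_le (hq0 : 0 < q) (hq1 : q < 1) :
    ∀ (l : List ℕ) (n : ℕ), qHstar q l n ≤ (q / (1 - q)) ^ l.length := by
  intro l
  induction l with
  | nil => intro n; rw [qHstar]; norm_num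
  | cons a l ih =>
    intro n
    have h1q : (0:ℝ) < 1 - q := by linarith
    have hC : (0:ℝ) ≤ (q / (1 - q)) ^ l.length :=
      pow_nonneg (div_nonneg hq0.le h1q.le) _
    rw [qHstar]
    have hterm : ∀ k ∈ Finset.Icc 1 n,
        q ^ k / qnum q k ^ a * qHstar q l k ≤ q ^ k * (q / (1 - q)) ^ l.length := by
      intro k hk
      have hk1 := (Finset.mem_Icc.mp hk).1
      have h1 : q ^ k / qnum q k ^ a ≤ q ^ k := by
        apply div_le_self (pow_nonneg hq0.le _)
        exact one_le_pow₀ (qnum_ge_one hq0 hq1 k hk1)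
      exact mul_le_mul h1 (ih k) (qHstar_nonneg hq0 hq1 l k)
        (pow_nonneg hq0.le _)
    calc ∑ k ∈ Finset.Icc 1 n, q ^ k / qnum q k ^ a * qHstar q l k
        ≤ ∑ k ∈ Finset.Icc 1 n, q ^ k * (q / (1 - q)) ^ l.length :=
          Finset.sum_le_sum hterm
      _ = (∑ k ∈ Finset.Icc 1 n, q ^ k) * (q / (1 - q)) ^ l.length := by
          rw [Finset.sum_mul]
      _ ≤ (q / (1 - q)) * (q / (1 - q)) ^ l.length := by
          exact mul_le_mul_of_nonneg_right (sum_Icc_pow_le hq0 hq1 n) hC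
      _ = (q / (1 - q)) ^ (a :: l).length := by
          rw [List.length_cons, pow_succ]
          ring

lemma zeta_lim (hq0 : 0 < q) (hq1 : q < 1) (a : ℕ) (l : List ℕ) :
    Filter.Tendsto (fun n => qHstar q (a :: l) n) Filter.atTop
      (nhds (qZetaStar q (a :: l))) := by
  set C : ℝ := (q / (1 - q)) ^ l.length with hC
  have h1q : (0:ℝ) < 1 - q := by linarith
  have hC0 : 0 ≤ C := pow_nonneg (div_nonneg hq0.le h1q.le) _
  set f : ℕ → ℝ := fun k => q ^ (k + 1) / qnum q (k + 1) ^ a * qHstar q l (k + 1) with hf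
  have hfnonneg : ∀ k, 0 ≤ f k := fun k =>
    mul_nonneg (div_nonneg (pow_nonneg hq0.le _)
      (pow_nonneg (qnum_pos hq0 hq1 (k+1) (by omega)).le _)) (qHstar_nonneg hq0 hq1 l _)
  have hfle : ∀ k, f k ≤ (C * q) * q ^ k := by
    intro k
    have h1 : q ^ (k+1) / qnum q (k+1) ^ a ≤ q ^ (k+1) := by
      apply div_le_self (pow_nonneg hq0.le _)
      exact one_le_pow₀ (qnum_ge_one hq0 hq1 (k+1) (by omega))
    calc f k ≤ q ^ (k+1) * C := mul_le_mul h1 (qHstar_le hq0 hq1 l (k+1))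
          (qHstar_nonneg hq0 hq1 l _) (pow_nonneg hq0.le _)
      _ = (C * q) * q ^ k := by rw [pow_succ]; ring
  have hsum : Summable f :=
    Summable.of_nonneg_of_le hfnonneg hfle
      (((summable_geometric_of_lt_one hq0.le hq1).mul_left (C * q)))
  have hz : qZetaStar q (a :: l) = ∑' k, f k := rfl
  have hH : ∀ n, qHstar q (a :: l) n = ∑ i ∈ Finset.range n, f i := by
    intro n
    rw [qHstar, sum_Icc_one_eq]
  rw [hz]
  simp only [hH]
  exact hsum.hasSum.tendsto_sum_nat

lemma AA_tendsto (hq0 : 0 < q) (hq1 : q < 1) (m : ℕ) :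
    Filter.Tendsto (fun n => AA q n m) Filter.atTop (nhds 1) := by
  have h1q : (0:ℝ) < 1 - q := by linarith
  have hlow : ∀ n, m ≤ n → (1 - q ^ (n - m + 1)) ^ m ≤ AA q n m := by
    intro n hn
    rw [AA, if_pos hn]
    have hden1 : (∏ j ∈ Finset.range m, (1 - q ^ (n + 1 + j))) ≤ 1 :=
      Finset.prod_le_one (fun j _ => (one_sub_pow_pos hq0 hq1 _ (by omega)).le)
        (fun j _ => one_sub_pow_le_one hq0 _)
    have hnum_low : (1 - q ^ (n - m + 1)) ^ m
        ≤ ∏ j ∈ Finset.range m, (1 - q ^ (n - m + 1 + j)) := by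
      have hc : (∏ _j ∈ Finset.range m, (1 - q ^ (n - m + 1))) = (1 - q ^ (n - m + 1)) ^ m := by
        rw [Finset.prod_const, Finset.card_range]
      rw [← hc]
      refine Finset.prod_le_prod (fun j _ => ?_) (fun j _ => ?_)
      · exact (one_sub_pow_pos hq0 hq1 _ (by omega)).le
      · have : q ^ (n - m + 1 + j) ≤ q ^ (n - m + 1) :=
          pow_le_pow_of_le_one hq0.le hq1.le (by omega)
        linarith
    refine le_trans hnum_low ?_
    rw [le_div_iff₀ (den_pos hq0 hq1 n m)]
    exact mul_le_of_le_one_right (num_pos hq0 hq1 n m).le hden1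
  have hq0' : Filter.Tendsto (fun n : ℕ => q ^ (n - m + 1)) Filter.atTop (nhds 0) := by
    have hsub : Filter.Tendsto (fun n : ℕ => n - m + 1) Filter.atTop Filter.atTop :=
      Filter.tendsto_atTop_mono (fun n => by omega)
        (Filter.tendsto_sub_atTop_nat m)
    exact (tendsto_pow_atTop_nhds_zero_of_lt_one hq0.le hq1).comp hsub
  have hlow_lim : Filter.Tendsto (fun n : ℕ => (1 - q ^ (n - m + 1)) ^ m)
      Filter.atTop (nhds 1) := by
    have := ((tendsto_const_nhds (x := (1:ℝ))).sub hq0').pow m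
    simpa using this
  refine tendsto_of_tendsto_of_tendsto_of_le_of_le' hlow_lim tendsto_const_nhds ?_ ?_
  · filter_upwards [Filter.eventually_atTop.mpr ⟨m, fun n hn => hlow n hn⟩] with n h
    exact h
  · filter_upwards with n
    exact AA_le_one hq0 hq1 n m

lemma cterm_nonneg (hq0 : 0 < q) (hq1 : q < 1) (s k : ℕ) : 0 ≤ cterm q s k := by
  rw [cterm]
  apply div_nonneg
  · exact mul_nonneg (by positivity) (pow_nonneg hq0.le _)
  · cases k with
    | zero => simp [qnum]
    | succ k => exact pow_nonneg (qnum_pos hq0 hq1 (k+1) (by omega)).le _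

lemma cterm_le (hq0 : 0 < q) (hq1 : q < 1) (s k : ℕ) (hk : 1 ≤ k) :
    cterm q s k ≤ 2 * q ^ k := by
  rw [cterm]
  have h1 : (1 + q ^ k) * q ^ (k ^ 2 + s * k) / qnum q k ^ (2 * s + 1)
      ≤ (1 + q ^ k) * q ^ (k ^ 2 + s * k) := by
    apply div_le_self
    · exact mul_nonneg (by positivity) (pow_nonneg hq0.le _)
    · exact one_le_pow₀ (qnum_ge_one hq0 hq1 k hk)
  refine le_trans h1 ?_
  have h2 : (1 : ℝ) + q ^ k ≤ 2 := by
    have : q ^ k ≤ 1 := (pow_le_one₀ hq0.le hq1.le)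
    linarith
  have h3 : q ^ (k ^ 2 + s * k) ≤ q ^ k :=
    pow_le_pow_of_le_one hq0.le hq1.le (by nlinarith)
  exact mul_le_mul h2 h3 (pow_nonneg hq0.le _) (by norm_num)

lemma rhs_lim (hq0 : 0 < q) (hq1 : q < 1) (s : ℕ) :
    Filter.Tendsto (fun n => ∑ k ∈ Finset.Icc 1 n, AA q n k * cterm q s k)
      Filter.atTop (nhds (∑' k : ℕ, cterm q s (k + 1))) := by
  have heq : ∀ n, ∑ k ∈ Finset.Icc 1 n, AA q n k * cterm q s k
      = ∑' k : ℕ, AA q n (k+1) * cterm q s (k+1) := by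
    intro n
    rw [sum_Icc_one_eq]
    refine (tsum_eq_sum fun k hk => ?_).symm
    have hnk : n ≤ k := le_of_not_gt fun h => hk (Finset.mem_range.mpr h)
    rw [AA_of_gt (Nat.lt_succ_of_le hnk), zero_mul]
  simp only [heq]
  have hbd : Summable (fun k : ℕ => 2 * q ^ (k + 1)) := by
    have : (fun k : ℕ => 2 * q ^ (k + 1)) = fun k => (2 * q) * q ^ k :=
      funext fun k => by ring
    rw [this]
    exact (summable_geometric_of_lt_one hq0.le hq1).mul_left (2 * q)
  refine tendsto_tsum_of_dominated_convergence hbd (fun k => ?_) ?_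
  · have := (AA_tendsto hq0 hq1 (k+1)).mul_const (cterm q s (k+1))
    simpa using this
  · filter_upwards with n k
    rw [Real.norm_eq_abs, abs_of_nonneg (mul_nonneg (AA_nonneg hq0 hq1 n (k+1))
      (cterm_nonneg hq0 hq1 s (k+1)))]
    calc AA q n (k+1) * cterm q s (k+1) ≤ cterm q s (k+1) :=
          mul_le_of_le_one_left (cterm_nonneg hq0 hq1 s (k+1)) (AA_le_one hq0 hq1 n (k+1))
      _ ≤ 2 * q ^ (k+1) := cterm_le hq0 hq1 s (k+1) (by omega)
end limits


theorem stmt10 (q : ℝ) (hq0 : 0 < q) (hq1 : q < 1) (s : ℕ) :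
    qZetaStar q (List.replicate s 2 ++ [1])
    = ∑' k : ℕ, (1 + q ^ (k + 1)) / qnum q (k + 1) ^ (2 * s + 1) *
        q ^ ((k + 1) ^ 2 + s * (k + 1)) := by

  obtain ⟨a, l, hal⟩ : ∃ a l, List.replicate s 2 ++ [1] = a :: l := by
    cases s with
    | zero => exact ⟨1, [], rfl⟩
    | succ s => exact ⟨2, List.replicate s 2 ++ [1], by simp [List.replicate_succ]⟩
  have h1 : Filter.Tendsto (fun n => qHstar q (List.replicate s 2 ++ [1]) n)
      Filter.atTop (nhds (qZetaStar q (List.replicate s 2 ++ [1]))) := by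
    rw [hal]
    exact zeta_lim hq0 hq1 a l
  have h3 : (fun n => qHstar q (List.replicate s 2 ++ [1]) n)
      = fun n => ∑ k ∈ Finset.Icc 1 n, AA q n k * cterm q s k :=
    funext fun n => Ffin hq0 hq1 s n
  rw [h3] at h1
  rw [tendsto_nhds_unique h1 (rhs_lim hq0 hq1 s)]
  refine tsum_congr fun k => ?_
  rw [cterm]
  ring
end

section
/- Let 0<q<1, let c>0 and c_1, c_2 be real numbers, and let (R_k) be a sequence of reals with |R_k| < k^{c_1} q^{c_2 k} for all k ≥ 1. Then lim_{n→∞} ∑_{k=1}^n q^{c k^2} (1 − [n choose k]_q/[n+k choose k]_q) R_k = 0. -/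
open Finset

section aux
variable {q : ℝ} (hq0 : 0 < q) (hq1 : q < 1)
include hq0 hq1

lemma qPoch_pos (n : ℕ) : 0 < qPoch q n := by
  apply Finset.prod_pos
  intro i _
  have : q ^ (i+1) < 1 := pow_lt_one₀ hq0.le hq1 (Nat.succ_ne_zero i)
  linarith

lemma qPoch_le_one (n : ℕ) : qPoch q n ≤ 1 := by
  apply Finset.prod_le_one
  · intro i _
    have : q ^ (i+1) ≤ 1 := pow_le_one₀ hq0.le hq1.le
    linarith
  · intro i _
    have : 0 < q ^ (i+1) := pow_pos hq0 _
    linarith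

lemma weier (s : Finset ℕ) (f : ℕ → ℝ) :
    (∀ i ∈ s, 0 ≤ f i) → (∀ i ∈ s, f i ≤ 1) → 1 - ∑ i ∈ s, f i ≤ ∏ i ∈ s, (1 - f i) := by
  classical
  induction s using Finset.induction_on with
  | empty => simp
  | @insert a s hx ih =>
    intro h0 h1
    rw [Finset.sum_insert hx, Finset.prod_insert hx]
    have h0a := h0 a (Finset.mem_insert_self a s)
    have h1a := h1 a (Finset.mem_insert_self a s)
    have ihs := ih (fun i hi => h0 i (Finset.mem_insert_of_mem hi))
      (fun i hi => h1 i (Finset.mem_insert_of_mem hi))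
    have hsum : ∑ i ∈ s, f i ≥ 0 := Finset.sum_nonneg (fun i hi => h0 i (Finset.mem_insert_of_mem hi))
    nlinarith

lemma key {n k : ℕ} (hk : 1 ≤ k) (hkn : k ≤ n) :
    0 ≤ 1 - qbinom q n k / qbinom q (n + k) k ∧
    1 - qbinom q n k / qbinom q (n + k) k ≤ k * q ^ (n + 1 - k) := by
  have hP := qPoch_pos hq0 hq1
  set m := n - k with hm
  have hmk : m + k = n := Nat.sub_add_cancel hkn
  set P1 : ℝ := ∏ j ∈ Finset.range k, (1 - q ^ (m + j + 1)) with hP1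
  set P2 : ℝ := ∏ j ∈ Finset.range k, (1 - q ^ (n + j + 1)) with hP2
  have hsplit1 : qPoch q n = qPoch q m * P1 := by
    rw [← hmk, qPoch, Finset.prod_range_add]
    congr 1
  have hsplit2 : qPoch q (n + k) = qPoch q n * P2 := by
    rw [qPoch, Finset.prod_range_add]
    congr 1
  have hB : qbinom q n k / qbinom q (n + k) k = P1 / P2 := by
    have h1 : qPoch q m ≠ 0 := (hP m).ne'
    have h2 : qPoch q k ≠ 0 := (hP k).ne'
    have h3 : qPoch q n ≠ 0 := (hP n).ne'
    have hP2 : P2 ≠ 0 := by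
      have := (hP (n+k)).ne'
      rw [hsplit2] at this
      intro h; apply this; rw [h, mul_zero]
    have hP1ne : P1 ≠ 0 := by
      have := h3
      rw [hsplit1] at this
      intro h; apply this; rw [h, mul_zero]
    rw [qbinom, qbinom, if_pos hkn, if_pos (Nat.le_add_left k n), Nat.add_sub_cancel, ← hm,
      hsplit2, hsplit1]
    field_simp
  have hterm0 : ∀ j ∈ Finset.range k, (0:ℝ) ≤ 1 - q ^ (m + j + 1) := by
    intro j _
    have : q ^ (m + j + 1) ≤ 1 := pow_le_one₀ hq0.le hq1.le
    linarith
  have hterm2 : ∀ j ∈ Finset.range k, (1:ℝ) - q ^ (m + j + 1) ≤ 1 - q ^ (n + j + 1) := by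
    intro j _
    have : q ^ (n + j + 1) ≤ q ^ (m + j + 1) :=
      pow_le_pow_of_le_one hq0.le hq1.le (by omega)
    linarith
  have hP1nn : 0 ≤ P1 := Finset.prod_nonneg hterm0
  have hP2pos : 0 < P2 := by
    apply Finset.prod_pos
    intro j _
    have : q ^ (n + j + 1) < 1 := pow_lt_one₀ hq0.le hq1 (by omega)
    linarith
  have hP2le1 : P2 ≤ 1 := by
    apply Finset.prod_le_one
    · intro j _
      have : q ^ (n + j + 1) ≤ 1 := pow_le_one₀ hq0.le hq1.le
      linarith
    · intro j _
      have : 0 < q ^ (n + j + 1) := pow_pos hq0 _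
      linarith
  have hBle1 : P1 / P2 ≤ 1 := by
    rw [div_le_one hP2pos]
    exact Finset.prod_le_prod hterm0 hterm2
  have hBgeP1 : P1 ≤ P1 / P2 := by
    rw [le_div_iff₀ hP2pos]
    nlinarith
  have hW : 1 - ∑ j ∈ Finset.range k, q ^ (m + j + 1) ≤ P1 :=
    weier hq0 hq1 _ _ (fun j _ => (pow_pos hq0 _).le)
      (fun j _ => pow_le_one₀ hq0.le hq1.le)
  have hsum : ∑ j ∈ Finset.range k, q ^ (m + j + 1) ≤ k * q ^ (n + 1 - k) := by
    have h1 : ∀ j ∈ Finset.range k, q ^ (m + j + 1) ≤ q ^ (n + 1 - k) := by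
      intro j _
      exact pow_le_pow_of_le_one hq0.le hq1.le (by omega)
    calc ∑ j ∈ Finset.range k, q ^ (m + j + 1) ≤ ∑ _j ∈ Finset.range k, q ^ (n + 1 - k) :=
          Finset.sum_le_sum h1
      _ = k * q ^ (n + 1 - k) := by simp [mul_comm]
  rw [hB]
  constructor
  · linarith
  · linarith

end aux


theorem stmt13 (q : ℝ) (hq0 : 0 < q) (hq1 : q < 1) (c c₁ c₂ : ℝ) (hc : 0 < c)
    (R : ℕ → ℝ) (hR : ∀ k : ℕ, 1 ≤ k → |R k| < (k : ℝ) ^ c₁ * q ^ (c₂ * k)) :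
    Filter.Tendsto
      (fun n : ℕ => ∑ k ∈ Finset.Icc 1 n,
        q ^ (c * (k : ℝ) ^ 2) * (1 - qbinom q n k / qbinom q (n + k) k) * R k)
      Filter.atTop (nhds 0) := by
  classical
  have hqb_pos : ∀ {n k : ℕ}, k ≤ n → 0 < qbinom q n k := by
    intro n k hkn
    rw [qbinom, if_pos hkn]
    exact div_pos (qPoch_pos hq0 hq1 _) (mul_pos (qPoch_pos hq0 hq1 _) (qPoch_pos hq0 hq1 _))
  set f : ℕ → ℕ → ℝ := fun n k =>
    if k ∈ Finset.Icc 1 n then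
      q ^ (c * (k : ℝ) ^ 2) * (1 - qbinom q n k / qbinom q (n + k) k) * R k
    else 0 with hf
  set bound : ℕ → ℝ := fun k => q ^ (c * (k : ℝ) ^ 2) * ((k : ℝ) ^ c₁ * q ^ (c₂ * (k : ℝ)))
    with hbound
  have hbound_nonneg : ∀ k, 0 ≤ bound k := by
    intro k
    have h1 : (0:ℝ) < q ^ (c * (k : ℝ) ^ 2) := Real.rpow_pos_of_pos hq0 _
    have h2 : (0:ℝ) ≤ (k : ℝ) ^ c₁ := Real.rpow_nonneg (Nat.cast_nonneg k) _
    have h3 : (0:ℝ) < q ^ (c₂ * (k : ℝ)) := Real.rpow_pos_of_pos hq0 _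
    positivity
  -- bound is summable
  have h_sum : Summable bound := by
    set m₀ := ⌈max c₁ 0⌉₊ with hm₀
    set N := max 1 ⌈(1 - c₂) / c⌉₊ with hN
    apply Summable.of_norm_bounded_eventually_nat (g := fun k => (k:ℝ) ^ m₀ * q ^ k)
    · apply summable_pow_mul_geometric_of_norm_lt_one
      rw [Real.norm_eq_abs, abs_of_pos hq0]; exact hq1
    · filter_upwards [Filter.eventually_ge_atTop N] with k hk
      have hk1 : (1:ℝ) ≤ (k:ℝ) := by
        have : 1 ≤ k := le_trans (le_max_left _ _) hk
        exact_mod_cast this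
      have hkc : (1 - c₂) / c ≤ (k:ℝ) := by
        have h1 : (⌈(1 - c₂) / c⌉₊ : ℝ) ≤ (k:ℝ) := by
          have : ⌈(1 - c₂) / c⌉₊ ≤ k := le_trans (le_max_right _ _) hk
          exact_mod_cast this
        exact le_trans (Nat.le_ceil _) h1
      have hck : 1 - c₂ ≤ c * (k:ℝ) := by
        rw [div_le_iff₀ hc] at hkc; linarith
      have hE : (k:ℝ) ≤ c * (k:ℝ) ^ 2 + c₂ * (k:ℝ) := by nlinarith
      have hQ : q ^ (c * (k:ℝ) ^ 2 + c₂ * (k:ℝ)) ≤ q ^ ((k:ℝ)) :=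
        Real.rpow_le_rpow_of_exponent_ge hq0 hq1.le hE
      have hA : (k:ℝ) ^ c₁ ≤ (k:ℝ) ^ ((m₀ : ℝ)) := by
        apply Real.rpow_le_rpow_of_exponent_le hk1
        exact le_trans (le_max_left c₁ 0) (Nat.le_ceil _)
      have hsplit : bound k = (k:ℝ) ^ c₁ * q ^ (c * (k:ℝ) ^ 2 + c₂ * (k:ℝ)) := by
        rw [hbound, Real.rpow_add hq0]; ring
      rw [Real.norm_eq_abs, abs_of_nonneg (hbound_nonneg k), hsplit]
      calc (k:ℝ) ^ c₁ * q ^ (c * (k:ℝ) ^ 2 + c₂ * (k:ℝ))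
          ≤ (k:ℝ) ^ ((m₀:ℝ)) * q ^ ((k:ℝ)) := by
            apply mul_le_mul hA hQ (Real.rpow_pos_of_pos hq0 _).le
            exact Real.rpow_nonneg (by linarith) _
        _ = (k:ℝ) ^ m₀ * q ^ k := by
            rw [Real.rpow_natCast, Real.rpow_natCast]
  -- uniform bound
  have h_bound : ∀ n k, ‖f n k‖ ≤ bound k := by
    intro n k
    by_cases hkmem : k ∈ Finset.Icc 1 n
    · obtain ⟨hk1, hkn⟩ := Finset.mem_Icc.mp hkmem
      rw [hf]
      simp only [if_pos hkmem]
      have hkey := key hq0 hq1 hk1 hkn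
      have hBnn : 0 < qbinom q n k / qbinom q (n + k) k :=
        div_pos (hqb_pos hkn) (hqb_pos (Nat.le_add_left k n))
      have h1B : |1 - qbinom q n k / qbinom q (n + k) k| ≤ 1 := by
        rw [abs_of_nonneg hkey.1]; linarith
      have hRk : |R k| ≤ (k : ℝ) ^ c₁ * q ^ (c₂ * (k:ℝ)) := (hR k hk1).le
      rw [norm_mul, norm_mul, Real.norm_eq_abs, Real.norm_eq_abs, Real.norm_eq_abs,
        abs_of_pos (Real.rpow_pos_of_pos hq0 _), hbound]
      have h2 : |1 - qbinom q n k / qbinom q (n + k) k| * |R k|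
          ≤ 1 * ((k : ℝ) ^ c₁ * q ^ (c₂ * (k:ℝ))) :=
        mul_le_mul h1B hRk (abs_nonneg _) zero_le_one
      rw [mul_assoc]
      have h3 := mul_le_mul_of_nonneg_left h2 (Real.rpow_pos_of_pos hq0 (c * (k:ℝ)^2)).le
      simpa using h3
    · rw [hf]
      simp only [if_neg hkmem, norm_zero]
      exact hbound_nonneg k
  -- pointwise limits
  have hab : ∀ k, Filter.Tendsto (fun n => f n k) Filter.atTop (nhds 0) := by
    intro k
    rcases Nat.eq_zero_or_pos k with rfl | hk1
    · have : ∀ n, f n 0 = 0 := by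
        intro n; rw [hf]; simp
      simpa [this] using tendsto_const_nhds (α := ℝ) (f := Filter.atTop (α := ℕ))
    · set C := q ^ (c * (k:ℝ) ^ 2) * ((k : ℝ) * |R k|) with hC
      have hCnn : 0 ≤ C := by
        have := (Real.rpow_pos_of_pos hq0 (c * (k:ℝ)^2)).le
        positivity
      apply squeeze_zero_norm' (a := fun n : ℕ => C * q ^ (n + 1 - k))
      · filter_upwards [Filter.eventually_ge_atTop k] with n hn
        have hkmem : k ∈ Finset.Icc 1 n := Finset.mem_Icc.mpr ⟨hk1, hn⟩
        rw [hf]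
        simp only [if_pos hkmem]
        have hkey := key hq0 hq1 hk1 hn
        rw [norm_mul, norm_mul, Real.norm_eq_abs, Real.norm_eq_abs, Real.norm_eq_abs,
          abs_of_pos (Real.rpow_pos_of_pos hq0 _), abs_of_nonneg hkey.1]
        have h2 : (1 - qbinom q n k / qbinom q (n + k) k) * |R k|
            ≤ ((k:ℝ) * q ^ (n + 1 - k)) * |R k| :=
          mul_le_mul_of_nonneg_right hkey.2 (abs_nonneg _)
        have h3 := mul_le_mul_of_nonneg_left h2 (Real.rpow_pos_of_pos hq0 (c * (k:ℝ)^2)).le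
        rw [mul_assoc]
        calc q ^ (c * (k:ℝ)^2) * ((1 - qbinom q n k / qbinom q (n + k) k) * |R k|)
            ≤ q ^ (c * (k:ℝ)^2) * (((k:ℝ) * q ^ (n + 1 - k)) * |R k|) := h3
          _ = C * q ^ (n + 1 - k) := by rw [hC]; ring
      · have h1 : Filter.Tendsto (fun n : ℕ => q ^ (n + 1 - k)) Filter.atTop (nhds 0) := by
          have h2 : Filter.Tendsto (fun n : ℕ => n + 1 - k) Filter.atTop Filter.atTop :=
            (Filter.tendsto_sub_atTop_nat k).comp (Filter.tendsto_add_atTop_nat 1)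
          exact (tendsto_pow_atTop_nhds_zero_of_lt_one hq0.le hq1).comp h2
        simpa using h1.const_mul C
  have hmain := tendsto_tsum_of_dominated_convergence h_sum hab
    (Filter.Eventually.of_forall h_bound)
  rw [tsum_zero] at hmain
  apply hmain.congr
  intro n
  rw [tsum_eq_sum (s := Finset.Icc 1 n) (fun k hk => by simp only [hf, if_neg hk])]
  exact Finset.sum_congr rfl fun k hk => by simp only [hf, if_pos hk]
end

section
/- Let 0<q<1 and l ≥ 1. Define F(l,k) = (q^{k-l}/[k]_q^2)([k choose l]_q/[k+l choose l]_q) and G(l,k) = ((1-q^{k-l})(1-q^{k+l})/q^{k-l}) F(l,k). Then (1-q^l)^2 F(l,k) = G(l,k+1) − G(l,k) for all integers k ≥ l. -/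
open Finset

set_option maxHeartbeats 1500000 in
theorem stmt16 (q : ℝ) (hq0 : 0 < q) (hq1 : q < 1) (l : ℕ) (hl : 1 ≤ l)
    (F G : ℕ → ℕ → ℝ)
    (hF : ∀ l k, F l k = q ^ (k - l) / qnum q k ^ 2 * (qbinom q k l / qbinom q (k + l) l))
    (hG : ∀ l k, G l k = (1 - q ^ (k - l)) * (1 - q ^ (k + l)) / q ^ (k - l) * F l k)
    (k : ℕ) (hk : l ≤ k) :
    (1 - q ^ l) ^ 2 * F l k = G l (k + 1) - G l k := by
  have hq0' : (0:ℝ) ≤ q := hq0.le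
  have h1q : (0:ℝ) < 1 - q := by linarith
  have hpow : ∀ n : ℕ, n ≠ 0 → q ^ n < 1 := fun n hn => pow_lt_one₀ hq0' hq1 hn
  have hPoch : ∀ n, 0 < qPoch q n := by
    intro n
    unfold qPoch
    apply Finset.prod_pos
    intro i _
    have : q ^ (i + 1) < 1 := hpow (i + 1) (by omega)
    linarith
  have hPochS : ∀ n : ℕ, qPoch q (n + 1) = qPoch q n * (1 - q ^ (n + 1)) := by
    intro n; unfold qPoch; exact Finset.prod_range_succ _ n
  have hqnum : ∀ n : ℕ, n ≠ 0 → qnum q n ≠ 0 := by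
    intro n hn
    have h1 : q ^ n < 1 := hpow n hn
    unfold qnum
    exact div_ne_zero (by linarith) h1q.ne'
  obtain ⟨m, rfl⟩ := Nat.exists_eq_add_of_le hk
  have e1 : l + m - l = m := by omega
  have e2 : l + m + 1 - l = m + 1 := by omega
  have e3 : l + m + 1 + l = (l + m + l) + 1 := by omega
  have e4 : l + m + l - l = l + m := by omega
  have e5 : l + m + l + 1 - l = l + m + 1 := by omega
  rw [hF, hG, hG, hF, hF]
  simp only [e3]
  simp only [qbinom, if_pos (by omega : l ≤ l + m), if_pos (by omega : l ≤ l + m + l),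
    if_pos (by omega : l ≤ l + m + 1), if_pos (by omega : l ≤ l + m + l + 1)]
  simp only [e1, e2, e4, e5]
  simp only [hPochS]
  have h1 : qPoch q l ≠ 0 := (hPoch l).ne'
  have h2 : qPoch q m ≠ 0 := (hPoch m).ne'
  have h3 : qPoch q (l + m) ≠ 0 := (hPoch (l + m)).ne'
  have h4 : qPoch q (l + m + l) ≠ 0 := (hPoch (l + m + l)).ne'
  have h5 : qnum q (l + m) ≠ 0 := hqnum _ (by omega)
  have h6 : qnum q (l + m + 1) ≠ 0 := hqnum _ (by omega)
  have h7 : (1 : ℝ) - q ^ (m + 1) ≠ 0 := by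
    have := hpow (m + 1) (by omega); linarith
  have h8 : (1 : ℝ) - q ^ (l + m + 1) ≠ 0 := by
    have := hpow (l + m + 1) (by omega); linarith
  have h9 : (1 : ℝ) - q ^ (l + m + l + 1) ≠ 0 := by
    have := hpow (l + m + l + 1) (by omega); linarith
  have hq : q ≠ 0 := hq0.ne'
  have h5' : (1 : ℝ) - q ^ (l + m) ≠ 0 := by
    have := hpow (l + m) (by omega); linarith
  simp only [qnum]
  field_simp
  ring
end

section
/- For any positive integer n and nonnegative integers s_1,…,s_m (m ≥ 1), the ordinary multiple harmonic sum satisfies H_n^*({2}^{s_1},1,…,{2}^{s_m},1) = ∑_{p=(2s_1+1)∘…∘(2s_m+1)} 2^{l(p)} Ĥ_n(p), where the sum is over all 2^{m-1} ways of replacing each ∘ by comma or plus, and l(p) is the number of parts of the resulting composition p. -/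
open Finset

section Aux

noncomputable def Aw (n k : ℕ) : ℝ := (n.choose k : ℝ) / ((n + k).choose n : ℝ)

lemma choose_ne (n k : ℕ) : (((n+k).choose n : ℕ) : ℝ) ≠ 0 := by
  have := Nat.choose_pos (show n ≤ n + k by omega)
  exact_mod_cast this.ne'

lemma Aw_zero (n : ℕ) : Aw n 0 = 1 := by simp [Aw]

lemma Aw_of_lt {n k : ℕ} (h : n < k) : Aw n k = 0 := by
  simp [Aw, Nat.choose_eq_zero_of_lt h]

lemma natid1 {n m : ℕ} (h2 : m + 1 ≤ n) :
    n.choose (m+1) * ((n+m+1) * ((n+m).choose n)) = n.choose m * ((n-m) * ((n+m+1).choose n)) := by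
  have s1 : (n+m).choose m = (n+m).choose n := by
    have := Nat.choose_symm (Nat.le_add_right n m); simpa using this
  have s2 : (n+m+1).choose n = (n+m+1).choose (m+1) := by
    have := Nat.choose_symm (show m+1 ≤ n+m+1 by omega)
    rw [show n+m+1-(m+1) = n by omega] at this; exact this
  have e1 : (n+m+1) * ((n+m).choose m) = (n+m+1).choose (m+1) * (m+1) := by
    have := Nat.add_one_mul_choose_eq (n + m) m
    simpa [Nat.succ_eq_add_one] using this
  have e2 : n.choose (m+1) * (m+1) = n.choose m * (n-m) := Nat.choose_succ_right_eq n m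
  calc n.choose (m+1) * ((n+m+1) * ((n+m).choose n))
      = n.choose (m+1) * ((n+m+1) * ((n+m).choose m)) := by rw [s1]
    _ = n.choose (m+1) * ((n+m+1).choose (m+1) * (m+1)) := by rw [e1]
    _ = (n.choose (m+1) * (m+1)) * ((n+m+1).choose (m+1)) := by ring
    _ = (n.choose m * (n-m)) * ((n+m+1).choose (m+1)) := by rw [e2]
    _ = n.choose m * ((n-m) * ((n+m+1).choose n)) := by rw [s2]; ring

/-- (n+k) ⬝ A n k = (n-k+1) ⬝ A n (k-1) for 1 ≤ k ≤ n, stated with k = m+1. -/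
lemma Aw_shift {n m : ℕ} (h2 : m + 1 ≤ n) :
    ((n:ℝ) + (m+1)) * Aw n (m+1) = ((n:ℝ) - m) * Aw n m := by
  unfold Aw
  rw [← mul_div_assoc, ← mul_div_assoc, div_eq_div_iff (choose_ne n (m+1)) (choose_ne n m)]
  have hnm : ((n:ℝ) - m) = ((n - m : ℕ) : ℝ) := by
    push_cast [Nat.cast_sub (show m ≤ n by omega)]; ring
  rw [hnm]
  have h' : ((n.choose (m+1) : ℝ)) * (((n:ℝ)+m+1) * ((n+m).choose n : ℝ))
      = (n.choose m : ℝ) * (((n-m : ℕ) : ℝ) * (((n+m+1).choose n : ℝ))) := by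
    exact_mod_cast natid1 h2
  have hi : n + (m+1) = n + m + 1 := rfl
  rw [hi]
  linear_combination h'

lemma Aw_telescope (n : ℕ) : ∀ d j, j + d = n →
    ∑ k ∈ Icc (j+1) n, (k:ℝ) * Aw n k = Aw n j * ((n:ℝ)-j)/2 := by
  intro d
  induction d with
  | zero =>
    intro j hj
    have : j = n := by omega
    subst this
    rw [Finset.Icc_eq_empty (by omega)]
    simp
  | succ d ih =>
    intro j hj
    have hj1 : j + 1 ≤ n := by omega
    have hins : Icc (j+1) n = insert (j+1) (Icc (j+2) n) := by
      ext x; simp only [Finset.mem_Icc, Finset.mem_insert]; omega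
    rw [hins, Finset.sum_insert (by simp only [Finset.mem_Icc]; omega)]
    rw [ih (j+1) (by omega)]
    have hs := Aw_shift (n := n) (m := j) hj1
    push_cast
    push_cast at hs
    linear_combination hs / 2

lemma natid2 {n k : ℕ} (hk : k ≤ n) :
    ((n+1)*(n+1)) * (n.choose k * ((n+k+1).choose (n+1)))
      = ((n-k+1)*(n+k+1)) * ((n+1).choose k * ((n+k).choose n)) := by
  have f1 : (n+1) * (n.choose k) = (n+1).choose k * (n-k+1) := by
    have h0 := Nat.add_one_mul_choose_eq n (n-k)
    have s1 : n.choose (n-k) = n.choose k := Nat.choose_symm hk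
    have s2 : (n+1).choose (n-k+1) = (n+1).choose k := by
      have := Nat.choose_symm (show n-k+1 ≤ n+1 by omega)
      rw [show n+1-(n-k+1) = k by omega] at this
      exact this.symm
    rw [s1, s2] at h0
    simpa [Nat.succ_eq_add_one] using h0
  have f2 : (n+k+1) * ((n+k).choose n) = (n+k+1).choose (n+1) * (n+1) := by
    have := Nat.add_one_mul_choose_eq (n+k) n
    simpa [Nat.succ_eq_add_one] using this
  calc ((n+1)*(n+1)) * (n.choose k * ((n+k+1).choose (n+1)))
      = ((n+1) * (n.choose k)) * ((n+k+1).choose (n+1) * (n+1)) := by ring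
    _ = ((n+1).choose k * (n-k+1)) * ((n+k+1) * ((n+k).choose n)) := by rw [f1, ← f2]
    _ = ((n-k+1)*(n+k+1)) * ((n+1).choose k * ((n+k).choose n)) := by ring

lemma Aw_succ_n (n k : ℕ) :
    ((n:ℝ)+1)^2 * Aw n k = (((n:ℝ)+1)^2 - (k:ℝ)^2) * Aw (n+1) k := by
  rcases lt_trichotomy k (n+1) with h | h | h
  · -- k ≤ n
    have hk : k ≤ n := by omega
    unfold Aw
    rw [show (n+1)+k = n+k+1 by omega]
    rw [← mul_div_assoc, ← mul_div_assoc, div_eq_div_iff (choose_ne n k) (by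
      have := Nat.choose_pos (show n+1 ≤ n+k+1 by omega)
      exact_mod_cast this.ne')]
    have h' : (((n+1)*(n+1) : ℕ) : ℝ) * ((n.choose k : ℝ) * (((n+k+1).choose (n+1) : ℝ)))
        = (((n-k+1)*(n+k+1) : ℕ) : ℝ) * (((n+1).choose k : ℝ) * (((n+k).choose n : ℝ))) := by
      exact_mod_cast natid2 hk
    have hc : (((n-k+1)*(n+k+1) : ℕ) : ℝ) = (((n:ℝ)+1)^2 - (k:ℝ)^2) := by
      push_cast [Nat.cast_sub hk]; ring
    rw [hc] at h'
    push_cast at h' ⊢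
    linear_combination h'
  · subst h
    rw [Aw_of_lt (by omega)]
    push_cast
    ring_nf
  · rw [Aw_of_lt (by omega), Aw_of_lt (by omega)]
    simp

lemma Hhat_cons (p : ℕ) (r : List ℕ) (n : ℕ) :
    Hhat (p::r) n = ∑ k ∈ Icc 1 n, Aw n k * ((1:ℝ)/(k:ℝ)^p) * Hstrict r (k-1) := rfl

lemma Icc_succ_ins (n : ℕ) : Icc 1 (n+1) = insert (n+1) (Icc 1 n) := by
  ext x; simp only [mem_Icc, mem_insert]; omega

lemma HstarO_succ (s : ℕ) (L : List ℕ) (n : ℕ) :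
    HstarO (s::L) (n+1) = HstarO (s::L) n + (1:ℝ)/((n:ℝ)+1)^s * HstarO L (n+1) := by
  show (∑ k ∈ Icc 1 (n+1), (1:ℝ)/(k:ℝ)^s * HstarO L k) = _
  rw [Icc_succ_ins, Finset.sum_insert (by simp)]
  have h : HstarO (s::L) n = ∑ k ∈ Icc 1 n, (1:ℝ)/(k:ℝ)^s * HstarO L k := rfl
  rw [h]
  push_cast; ring

lemma HstarO_zero (s : ℕ) (L : List ℕ) : HstarO (s::L) 0 = 0 := by
  show (∑ k ∈ Icc 1 (0:ℕ), (1:ℝ)/(k:ℝ)^s * HstarO L k) = 0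
  simp

lemma Hhat_zero (p : ℕ) (r : List ℕ) : Hhat (p::r) 0 = 0 := by
  rw [Hhat_cons]; simp

lemma Aw_succ_zero {n k : ℕ} (hk : n < k) : Aw n k = 0 := Aw_of_lt hk

lemma Hhat_cons_ext (p : ℕ) (r : List ℕ) (n : ℕ) :
    Hhat (p::r) n = ∑ k ∈ Icc 1 (n+1), Aw n k * ((1:ℝ)/(k:ℝ)^p) * Hstrict r (k-1) := by
  rw [Hhat_cons]
  apply Finset.sum_subset
  · intro x hx; simp only [mem_Icc] at *; omega
  · intro x hx hx'
    simp only [mem_Icc] at hx hx'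
    have : x = n+1 := by omega
    subst this
    rw [Aw_of_lt (by omega)]
    ring

lemma Hhat_diff (p : ℕ) (r : List ℕ) (n : ℕ) :
    ((n:ℝ)+1)^2 * (Hhat (p::r) (n+1) - Hhat (p::r) n)
      = ∑ k ∈ Icc 1 (n+1), Aw (n+1) k * ((k:ℝ)^2 * ((1:ℝ)/(k:ℝ)^p)) * Hstrict r (k-1) := by
  rw [Hhat_cons, Hhat_cons_ext, ← Finset.sum_sub_distrib, Finset.mul_sum]
  apply Finset.sum_congr rfl
  intro k hk
  have hA := Aw_succ_n n k
  push_cast at hA ⊢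
  linear_combination (-((1:ℝ)/(k:ℝ)^p) * Hstrict r (k-1)) * hA

lemma key_swap (n q0 : ℕ) (r : List ℕ) :
    2 * (∑ k ∈ Icc 1 n, Aw n k * ((k:ℝ)^2 * ((1:ℝ)/(k:ℝ)^1)) * Hstrict (q0::r) (k-1))
    + (∑ k ∈ Icc 1 n, Aw n k * ((k:ℝ)^2 * ((1:ℝ)/(k:ℝ)^(q0+1))) * Hstrict r (k-1))
    = (n:ℝ) * (∑ k ∈ Icc 1 n, Aw n k * ((1:ℝ)/(k:ℝ)^q0) * Hstrict r (k-1)) := by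
  have e2 : ∀ k ∈ Icc 1 n, Aw n k * ((k:ℝ)^2 * ((1:ℝ)/(k:ℝ)^1)) * Hstrict (q0::r) (k-1)
      = ∑ j ∈ Icc 1 (k-1), ((k:ℝ) * Aw n k) * (((1:ℝ)/(j:ℝ)^q0) * Hstrict r (j-1)) := by
    intro k hk
    simp only [mem_Icc] at hk
    have hk0 : (k:ℝ) ≠ 0 := Nat.cast_ne_zero.mpr (by omega)
    rw [show Hstrict (q0::r) (k-1) = ∑ j ∈ Icc 1 (k-1), (1:ℝ)/(j:ℝ)^q0 * Hstrict r (j-1) from rfl]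
    rw [Finset.mul_sum]
    apply Finset.sum_congr rfl
    intro j hj
    have hx : (k:ℝ)^2 * ((1:ℝ)/(k:ℝ)^1) = (k:ℝ) := by rw [pow_one, sq]; field_simp
    rw [hx]; ring
  have e1 : ∑ k ∈ Icc 1 n, Aw n k * ((k:ℝ)^2 * ((1:ℝ)/(k:ℝ)^1)) * Hstrict (q0::r) (k-1)
      = ∑ j ∈ Icc 1 n, (Aw n j * (((n:ℝ)-j)/2)) * (((1:ℝ)/(j:ℝ)^q0) * Hstrict r (j-1)) := by
    rw [Finset.sum_congr rfl e2]
    rw [Finset.sum_comm' (s := Icc 1 n) (t := fun k => Icc 1 (k-1))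
      (t' := Icc 1 n) (s' := fun j => Icc (j+1) n) (by intro k j; simp only [mem_Icc]; omega)]
    apply Finset.sum_congr rfl
    intro j hj
    simp only [mem_Icc] at hj
    rw [← Finset.sum_mul, Aw_telescope n (n-j) j (by omega)]
    ring
  rw [e1, Finset.mul_sum, Finset.mul_sum, ← Finset.sum_add_distrib]
  apply Finset.sum_congr rfl
  intro j hj
  simp only [mem_Icc] at hj
  have hj0 : (j:ℝ) ≠ 0 := Nat.cast_ne_zero.mpr (by omega)
  have hp : (j:ℝ)^2 * ((1:ℝ)/(j:ℝ)^(q0+1)) = (j:ℝ) * ((1:ℝ)/(j:ℝ)^q0) := by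
    rw [pow_succ]; field_simp; ring
  rw [hp]
  ring

def mcD : List ℕ → List Bool → ℕ
  | [], _ => 0
  | _ :: _, [] => 0
  | _ :: _, true :: _ => 0
  | b :: t, false :: bs => b + mcD t bs

def mcT : List ℕ → List Bool → List ℕ
  | [], _ => []
  | _ :: _, [] => []
  | b :: t, true :: bs => mergeComp b t bs
  | _ :: t, false :: bs => mcT t bs

lemma mergeComp_eq : ∀ (l : List ℕ) (bs : List Bool) (x : ℕ),
    mergeComp x l bs = (x + mcD l bs) :: mcT l bs := by
  intro l
  induction l with
  | nil => intro bs x; cases bs <;> simp [mergeComp, mcD, mcT]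
  | cons b t ih =>
    intro bs x
    cases bs with
    | nil => simp [mergeComp, mcD, mcT]
    | cons c bs' =>
      cases c with
      | true => simp [mergeComp, mcD, mcT]
      | false =>
        show mergeComp (x+b) t bs' = _
        rw [ih bs' (x+b)]
        show _ = (x + (b + mcD t bs')) :: mcT t bs'
        congr 1
        omega

noncomputable def RHSfun (a : ℕ) (t : List ℕ) (n : ℕ) : ℝ :=
  ∑ f : Fin t.length → Bool,
    (2:ℝ) ^ (mergeComp (2*a+1) (t.map (fun s => 2*s+1)) (List.ofFn f)).length *
      Hhat (mergeComp (2*a+1) (t.map (fun s => 2*s+1)) (List.ofFn f)) n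

noncomputable def LHSfun (a : ℕ) (t : List ℕ) (n : ℕ) : ℝ :=
  HstarO (((a :: t).map (fun s => List.replicate s 2 ++ [1])).flatten) n

lemma RHS_zero (a : ℕ) (t : List ℕ) : RHSfun a t 0 = 0 := by
  unfold RHSfun
  apply Finset.sum_eq_zero
  intro f _
  rw [mergeComp_eq, Hhat_zero]
  ring

lemma LHS_list_succ (a : ℕ) (t : List ℕ) :
    (((a+1) :: t).map (fun s => List.replicate s 2 ++ [1])).flatten
      = 2 :: ((a :: t).map (fun s => List.replicate s 2 ++ [1])).flatten := by
  simp [List.replicate_succ]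

lemma LHS_list_zero_cons (b : ℕ) (t' : List ℕ) :
    ((0 :: b :: t').map (fun s => List.replicate s 2 ++ [1])).flatten
      = 1 :: ((b :: t').map (fun s => List.replicate s 2 ++ [1])).flatten := by
  simp

lemma LHS_list_zero_nil :
    (([0] : List ℕ).map (fun s => List.replicate s 2 ++ [1])).flatten = [1] := by simp

lemma LHS_zero (a : ℕ) (t : List ℕ) : LHSfun a t 0 = 0 := by
  unfold LHSfun
  cases a with
  | zero =>
    cases t with
    | nil => rw [LHS_list_zero_nil]; exact HstarO_zero 1 []
    | cons b t' => rw [LHS_list_zero_cons]; exact HstarO_zero 1 _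
  | succ a => rw [LHS_list_succ]; exact HstarO_zero 2 _

lemma LHS_step2 (a : ℕ) (t : List ℕ) (n : ℕ) :
    ((n:ℝ)+1)^2 * (LHSfun (a+1) t (n+1) - LHSfun (a+1) t n) = LHSfun a t (n+1) := by
  unfold LHSfun
  rw [LHS_list_succ, HstarO_succ 2]
  have hne : ((n:ℝ)+1)^2 ≠ 0 := by positivity
  field_simp
  ring

lemma LHS_step1_cons (b : ℕ) (t' : List ℕ) (n : ℕ) :
    ((n:ℝ)+1) * (LHSfun 0 (b::t') (n+1) - LHSfun 0 (b::t') n) = LHSfun b t' (n+1) := by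
  unfold LHSfun
  rw [LHS_list_zero_cons, HstarO_succ 1]
  have hne : ((n:ℝ)+1) ≠ 0 := by positivity
  field_simp
  ring

lemma LHS_step1_nil (n : ℕ) :
    ((n:ℝ)+1) * (LHSfun 0 [] (n+1) - LHSfun 0 [] n) = 1 := by
  unfold LHSfun
  rw [LHS_list_zero_nil, HstarO_succ 1]
  show ((n:ℝ)+1) * (_ + 1/((n:ℝ)+1)^1 * (1:ℝ) - _) = 1
  have hne : ((n:ℝ)+1) ≠ 0 := by positivity
  field_simp
  ring

lemma pow_shift_sum (n q : ℕ) (T : List ℕ) :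
    ∑ k ∈ Icc 1 (n+1), Aw (n+1) k * ((k:ℝ)^2*((1:ℝ)/(k:ℝ)^(q+2))) * Hstrict T (k-1)
      = ∑ k ∈ Icc 1 (n+1), Aw (n+1) k * ((1:ℝ)/(k:ℝ)^q) * Hstrict T (k-1) := by
  apply Finset.sum_congr rfl
  intro k hk
  simp only [mem_Icc] at hk
  have hk0 : (k:ℝ) ≠ 0 := Nat.cast_ne_zero.mpr (by omega)
  have hx : (k:ℝ)^2 * ((1:ℝ)/(k:ℝ)^(q+2)) = (1:ℝ)/(k:ℝ)^q := by
    rw [pow_add]; field_simp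
  rw [hx]

lemma RHS_step2 (a : ℕ) (t : List ℕ) (n : ℕ) :
    ((n:ℝ)+1)^2 * (RHSfun (a+1) t (n+1) - RHSfun (a+1) t n) = RHSfun a t (n+1) := by
  unfold RHSfun
  rw [← Finset.sum_sub_distrib, Finset.mul_sum]
  apply Finset.sum_congr rfl
  intro f _
  rw [mergeComp_eq (t.map (fun s => 2*s+1)) (List.ofFn f) (2*(a+1)+1),
      mergeComp_eq (t.map (fun s => 2*s+1)) (List.ofFn f) (2*a+1)]
  rw [show 2*(a+1)+1 + mcD (t.map (fun s => 2*s+1)) (List.ofFn f)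
        = (2*a+1 + mcD (t.map (fun s => 2*s+1)) (List.ofFn f)) + 2 from by omega]
  set q := 2*a+1 + mcD (t.map (fun s => 2*s+1)) (List.ofFn f)
  set T := mcT (t.map (fun s => 2*s+1)) (List.ofFn f)
  have hd := Hhat_diff (q+2) T n
  rw [pow_shift_sum n q T, ← Hhat_cons q T (n+1)] at hd
  simp only [List.length_cons]
  linear_combination ((2:ℝ)^(T.length+1)) * hd

lemma sum_pi_succ (m : ℕ) (G : (Fin (m+1) → Bool) → ℝ) :
    ∑ f : Fin (m+1) → Bool, G f
      = ∑ g : Fin m → Bool, (G (Fin.cons true g) + G (Fin.cons false g)) := by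
  calc ∑ f : Fin (m+1) → Bool, G f
      = ∑ p : Bool × (Fin m → Bool), G (Fin.cons p.1 p.2) := by
        apply Fintype.sum_equiv (Fin.consEquiv (fun _ => Bool)).symm
        intro f
        simp [Fin.consEquiv, Fin.cons_self_tail]
    _ = ∑ c : Bool, ∑ g : Fin m → Bool, G (Fin.cons c g) := Fintype.sum_prod_type _
    _ = _ := by
        rw [Fintype.sum_bool, ← Finset.sum_add_distrib]

lemma RHS_nil (a n : ℕ) : RHSfun a [] n = 2 * Hhat [2*a+1] n := by
  unfold RHSfun
  simp only [List.length_nil, List.map_nil]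
  rw [Fintype.sum_unique]
  simp [mergeComp]

lemma RHS_step1_nil (n : ℕ) :
    ((n:ℝ)+1)^2 * (RHSfun 0 [] (n+1) - RHSfun 0 [] n) = (n:ℝ)+1 := by
  rw [RHS_nil, RHS_nil]
  have hd := Hhat_diff (2*0+1) [] n
  have hs : ∑ k ∈ Icc 1 (n+1), Aw (n+1) k * ((k:ℝ)^2 * ((1:ℝ)/(k:ℝ)^(2*0+1))) * Hstrict [] (k-1)
      = ∑ k ∈ Icc 1 (n+1), (k:ℝ) * Aw (n+1) k := by
    apply Finset.sum_congr rfl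
    intro k hk
    simp only [mem_Icc] at hk
    have hk0 : (k:ℝ) ≠ 0 := Nat.cast_ne_zero.mpr (by omega)
    have h1 : Hstrict [] (k-1) = 1 := rfl
    rw [h1, pow_one]
    field_simp
  rw [hs, Aw_telescope (n+1) (n+1) 0 (by omega), Aw_zero] at hd
  push_cast at hd
  linear_combination 2 * hd

lemma RHS_step1_cons (b : ℕ) (t' : List ℕ) (n : ℕ) :
    ((n:ℝ)+1)^2 * (RHSfun 0 (b::t') (n+1) - RHSfun 0 (b::t') n)
      = ((n:ℝ)+1) * RHSfun b t' (n+1) := by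
  unfold RHSfun
  simp only [List.length_cons, List.map_cons]
  rw [sum_pi_succ, sum_pi_succ]
  rw [← Finset.sum_sub_distrib, Finset.mul_sum, Finset.mul_sum]
  apply Finset.sum_congr rfl
  intro g _
  have hofn : ∀ c : Bool, List.ofFn (Fin.cons c g : Fin (t'.length+1) → Bool)
      = c :: List.ofFn g := by
    intro c
    rw [List.ofFn_succ]
    simp
  rw [hofn, hofn]
  have hmt : mergeComp (2*0+1) ((2*b+1) :: t'.map (fun s => 2*s+1)) (true :: List.ofFn g)
      = 1 :: mergeComp (2*b+1) (t'.map (fun s => 2*s+1)) (List.ofFn g) := rfl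
  have hmf : mergeComp (2*0+1) ((2*b+1) :: t'.map (fun s => 2*s+1)) (false :: List.ofFn g)
      = mergeComp (2*0+1 + (2*b+1)) (t'.map (fun s => 2*s+1)) (List.ofFn g) := rfl
  rw [hmt, hmf]
  rw [mergeComp_eq (t'.map (fun s => 2*s+1)) (List.ofFn g) (2*0+1 + (2*b+1)),
      mergeComp_eq (t'.map (fun s => 2*s+1)) (List.ofFn g) (2*b+1)]
  rw [show 2*0+1 + (2*b+1) + mcD (t'.map (fun s => 2*s+1)) (List.ofFn g)
        = (2*b+1 + mcD (t'.map (fun s => 2*s+1)) (List.ofFn g)) + 1 from by omega]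
  set q0 := 2*b+1 + mcD (t'.map (fun s => 2*s+1)) (List.ofFn g)
  set T := mcT (t'.map (fun s => 2*s+1)) (List.ofFn g)
  have hd1 := Hhat_diff 1 (q0::T) n
  have hd2 := Hhat_diff (q0+1) T n
  have hk := key_swap (n+1) q0 T
  have hc := Hhat_cons q0 T (n+1)
  rw [hc]
  push_cast at hk
  simp only [List.length_cons]
  linear_combination ((2:ℝ)^(T.length+1)*2) * hd1 + ((2:ℝ)^(T.length+1)) * hd2
    + ((2:ℝ)^(T.length+1)) * hk

lemma bridge_a (a : ℕ) (t : List ℕ) (h : ∀ n, LHSfun a t n = RHSfun a t n) :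
    ∀ n, LHSfun (a+1) t n = RHSfun (a+1) t n := by
  intro n
  induction n with
  | zero => rw [LHS_zero, RHS_zero]
  | succ n ihn =>
    have hl := LHS_step2 a t n
    have hr := RHS_step2 a t n
    have hne2 : ((n:ℝ)+1)^2 ≠ 0 := by positivity
    apply mul_left_cancel₀ hne2
    linear_combination hl - hr + ((n:ℝ)+1)^2 * ihn + h (n+1)

lemma main_all : ∀ (t : List ℕ) (a n : ℕ), LHSfun a t n = RHSfun a t n := by
  intro t
  induction t with
  | nil =>
    intro a
    induction a with
    | zero =>
      intro n
      induction n with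
      | zero => rw [LHS_zero, RHS_zero]
      | succ n ihn =>
        have hl := LHS_step1_nil n
        have hr := RHS_step1_nil n
        have hne2 : ((n:ℝ)+1)^2 ≠ 0 := by positivity
        apply mul_left_cancel₀ hne2
        linear_combination ((n:ℝ)+1) * hl - hr + ((n:ℝ)+1)^2 * ihn
    | succ a iha => exact bridge_a a [] iha
  | cons b t' iht =>
    intro a
    induction a with
    | zero =>
      intro n
      induction n with
      | zero => rw [LHS_zero, RHS_zero]
      | succ n ihn =>
        have hl := LHS_step1_cons b t' n
        have hr := RHS_step1_cons b t' n
        have hx := iht b (n+1)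
        have hne2 : ((n:ℝ)+1)^2 ≠ 0 := by positivity
        apply mul_left_cancel₀ hne2
        linear_combination ((n:ℝ)+1) * hl - hr + ((n:ℝ)+1)^2 * ihn + ((n:ℝ)+1) * hx
    | succ a iha => exact bridge_a a (b::t') iha

end Aux

theorem stmt17 (n : ℕ) (hn : 1 ≤ n) (a : ℕ) (t : List ℕ) :
    HstarO (((a :: t).map (fun s => List.replicate s 2 ++ [1])).flatten) n
    = ∑ f : Fin t.length → Bool,
        (2 : ℝ) ^ (mergeComp (2 * a + 1) (t.map (fun s => 2 * s + 1)) (List.ofFn f)).length *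
          Hhat (mergeComp (2 * a + 1) (t.map (fun s => 2 * s + 1)) (List.ofFn f)) n :=
  main_all t a n
end

section
/- For any positive integer n and nonnegative integer a, the ordinary multiple harmonic sum satisfies H_n^*({2}^a) = 2 ∑_{k=1}^n (C(n,k)/C(n+k,n)) (-1)^{k-1}/k^{2a}, the q→1 limit case of the q-identity for strings of twos. -/
open Finset

noncomputable def cc (n k : ℕ) : ℝ := (n.choose k : ℝ) / ((n + k).choose n)

lemma ccB_pos (n k : ℕ) : 0 < (((n + k).choose n : ℕ) : ℝ) := by
  exact_mod_cast Nat.choose_pos (Nat.le_add_right n k)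

/-- ((n+k+1).choose n) * (k+1) = ((n+k).choose n) * (n+k+1)  (in ℝ) -/
lemma rel1 (n k : ℕ) :
    (((n+k+1).choose n : ℕ) : ℝ) * (k+1) = (((n+k).choose n : ℕ) : ℝ) * (n+k+1) := by
  have h1 : (n+k).choose k = (n+k).choose n := by
    rw [← Nat.choose_symm (Nat.le_add_right n k)]; congr 1; omega
  have h2 : (n+k+1).choose (k+1) = (n+k+1).choose n := by
    rw [← Nat.choose_symm (by omega : n ≤ n+k+1)]; congr 1; omega
  have := Nat.add_one_mul_choose_eq (n+k) k
  rw [Nat.add_one_mul_choose_eq] at *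
  have : (n+k+1) * ((n+k).choose n) = ((n+k+1).choose n) * (k+1) := by
    rw [← h1, ← h2]; exact (Nat.add_one_mul_choose_eq (n+k) k)
  exact_mod_cast by linarith [congrArg (Nat.cast : ℕ → ℝ) this] 

/-- (n.choose (k+1)) * (k+1) = (n.choose k) * (n-k)  in ℝ, for k ≤ n -/
lemma rel2 (n k : ℕ) (hk : k ≤ n) :
    ((n.choose (k+1) : ℕ) : ℝ) * (k+1) = ((n.choose k : ℕ) : ℝ) * ((n:ℝ) - k) := by
  have := Nat.choose_succ_right_eq n k
  have hc : ((n.choose (k+1) * (k+1) : ℕ) : ℝ) = ((n.choose k * (n - k) : ℕ) : ℝ) := by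
    exact_mod_cast congrArg (Nat.cast : ℕ → ℝ) this
  push_cast [Nat.cast_sub hk] at hc
  linarith

/-- ((n+1).choose k) * ((n:ℝ)+1-k) = (n.choose k) * (n+1), for k ≤ n -/
lemma rel3 (n k : ℕ) (hk : k ≤ n) :
    (((n+1).choose k : ℕ) : ℝ) * ((n:ℝ)+1-(k:ℝ)) = ((n.choose k : ℕ) : ℝ) * ((n:ℝ)+1) := by
  have h1 := Nat.add_one_mul_choose_eq n k
  -- (n+1) * n.choose k = (n+1).choose (k+1) * (k+1)
  have h2 := rel2 (n+1) k (by omega)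
  push_cast at h1 h2 ⊢
  have h1' : ((n:ℝ)+1) * (n.choose k : ℝ) = ((n+1).choose (k+1) : ℝ) * ((k:ℝ)+1) := by
    exact_mod_cast congrArg (Nat.cast : ℕ → ℝ) h1
  nlinarith [h1', h2]

/-- ((n+k+1).choose (n+1)) * (n+1) = ((n+k).choose n) * (n+k+1)  in ℝ -/
lemma rel4 (n k : ℕ) :
    (((n+k+1).choose (n+1) : ℕ) : ℝ) * ((n:ℝ)+1) = (((n+k).choose n : ℕ) : ℝ) * ((n:ℝ)+(k:ℝ)+1) := by
  have h := Nat.add_one_mul_choose_eq (n+k) n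
  have hc := congrArg (Nat.cast : ℕ → ℝ) h
  push_cast at hc
  linarith

lemma stepB (n k : ℕ) (hk1 : 1 ≤ k) (hk : k ≤ n) :
    cc (n+1) k / (k:ℝ)^2 = cc n k / (k:ℝ)^2 + cc (n+1) k / ((n:ℝ)+1)^2 := by
  set A : ℝ := (n.choose k : ℝ) with hA
  set B : ℝ := ((n+k).choose n : ℝ) with hB
  set A' : ℝ := ((n+1).choose k : ℝ) with hA'
  set B' : ℝ := (((n+1)+k).choose (n+1) : ℝ) with hB'
  have h1 : A' * ((n:ℝ)+1-(k:ℝ)) = A * ((n:ℝ)+1) := rel3 n k hk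
  have h2 : B' * ((n:ℝ)+1) = B * ((n:ℝ)+(k:ℝ)+1) := by
    have := rel4 n k
    have he : (n+1)+k = n+k+1 := by omega
    rw [hB', he]; exact this
  have hBpos : 0 < B := ccB_pos n k
  have hB'pos : 0 < B' := ccB_pos (n+1) k
  have hkpos : (0:ℝ) < (k:ℝ) := by exact_mod_cast hk1
  have hn1 : (0:ℝ) < (n:ℝ)+1 := by positivity
  have key : A' * B * (((n:ℝ)+1)^2 - (k:ℝ)^2) = A * B' * ((n:ℝ)+1)^2 := by
    linear_combination (B*((n:ℝ)+1+(k:ℝ)))*h1 - (A*((n:ℝ)+1))*h2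
  show A'/B' / (k:ℝ)^2 = A/B/(k:ℝ)^2 + A'/B'/((n:ℝ)+1)^2
  rw [div_div, div_div, div_div, div_add_div _ _ (mul_pos hBpos (pow_pos hkpos 2)).ne'
    (mul_pos hB'pos (pow_pos hn1 2)).ne', div_eq_div_iff (mul_pos hB'pos (pow_pos hkpos 2)).ne'
    (mul_pos (mul_pos hBpos (pow_pos hkpos 2)) (mul_pos hB'pos (pow_pos hn1 2))).ne']
  linear_combination ((k:ℝ)^2*B')*key

lemma lemB (k : ℕ) (hk : 1 ≤ k) : ∀ n, k ≤ n →
    ∑ j ∈ Icc k n, cc j k / (j:ℝ)^2 = cc n k / (k:ℝ)^2 := by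
  intro n hn
  induction n, hn using Nat.le_induction with
  | base => simp [Finset.Icc_self]
  | succ n hn ih =>
      rw [Finset.sum_Icc_succ_top (by omega : k ≤ n+1), ih]
      push_cast
      exact (stepB n k hk hn).symm

noncomputable def TT (n j : ℕ) : ℝ := -(((n:ℝ)+j)/(2*n)) * (-1)^j * cc n j

lemma lemA_term (n k : ℕ) (hn : 1 ≤ n) (hk : k ≤ n) :
    (-1:ℝ)^k * cc n k = TT n (k+1) - TT n k := by
  set A : ℝ := (n.choose k : ℝ) with hA
  set B : ℝ := ((n+k).choose n : ℝ) with hB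
  set A' : ℝ := (n.choose (k+1) : ℝ) with hA'
  set B' : ℝ := ((n+(k+1)).choose n : ℝ) with hB'
  have h1 : A' * ((k:ℝ)+1) = A * ((n:ℝ)-(k:ℝ)) := rel2 n k hk
  have h2 : B' * ((k:ℝ)+1) = B * ((n:ℝ)+(k:ℝ)+1) := by
    have h := rel1 n k
    have he : n+(k+1) = n+k+1 := by omega
    rw [hB', he]; push_cast at h ⊢; linarith
  have hBpos : 0 < B := ccB_pos n k
  have hB'pos : 0 < B' := ccB_pos n (k+1)
  have hnpos : (0:ℝ) < (n:ℝ) := by exact_mod_cast hn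
  have key : A' * B * (((n:ℝ)+(k:ℝ)+1) * ((k:ℝ)+1)) = A * B' * (((n:ℝ)-(k:ℝ)) * ((k:ℝ)+1)) := by
    linear_combination (B*((n:ℝ)+(k:ℝ)+1))*h1 - (A*((n:ℝ)-(k:ℝ)))*h2
  have hk1 : ((k:ℝ)+1) ≠ 0 := by positivity
  have key2 : A' * B * ((n:ℝ)+(k:ℝ)+1) = A * B' * ((n:ℝ)-(k:ℝ)) := by
    have := mul_right_cancel₀ hk1 (by linear_combination key :
      (A' * B * ((n:ℝ)+(k:ℝ)+1)) * ((k:ℝ)+1) = (A * B' * ((n:ℝ)-(k:ℝ))) * ((k:ℝ)+1))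
    exact this
  have hdiv : A'/B' = (A*((n:ℝ)-(k:ℝ)))/(B*((n:ℝ)+(k:ℝ)+1)) := by
    rw [div_eq_div_iff (ne_of_gt hB'pos) (by positivity)]
    linear_combination key2
  have hmain : A/B = ((n:ℝ)+(k:ℝ)+1)/(2*(n:ℝ))*(A'/B') + ((n:ℝ)+(k:ℝ))/(2*(n:ℝ))*(A/B) := by
    rw [hdiv]
    field_simp
    ring
  have e1 : TT n (k+1) - TT n k
      = (-1:ℝ)^k * (((n:ℝ)+(k:ℝ)+1)/(2*(n:ℝ))*(A'/B') + ((n:ℝ)+(k:ℝ))/(2*(n:ℝ))*(A/B)) := by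
    simp only [TT, cc]
    push_cast
    ring
  have hcc : cc n k = A/B := rfl
  rw [e1, ← hmain, hcc]

lemma lemA (n : ℕ) (hn : 1 ≤ n) :
    ∑ k ∈ Icc 1 n, cc n k * (-1:ℝ)^(k-1) = 1/2 := by
  have hr : ∑ k ∈ range (n+1), (-1:ℝ)^k * cc n k = TT n (n+1) - TT n 0 := by
    rw [← Finset.sum_range_sub (TT n)]
    refine sum_congr rfl fun k hk => ?_
    exact lemA_term n k hn (Nat.lt_succ_iff.mp (mem_range.mp hk))
  have hT1 : TT n (n+1) = 0 := by
    simp [TT, cc, Nat.choose_eq_zero_of_lt (by omega : n < n+1)]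
  have hT0 : TT n 0 = -(1/2) := by
    have hn' : (n:ℝ) ≠ 0 := by positivity
    simp [TT, cc]
    field_simp
  have hs : range (n+1) = insert 0 (Icc 1 n) := by
    ext x; simp [Finset.mem_range, Finset.mem_Icc]; omega
  rw [hs, Finset.sum_insert (by simp)] at hr
  simp only [pow_zero, one_mul] at hr
  have hcc0 : cc n 0 = 1 := by simp [cc]
  rw [hcc0, hT1, hT0] at hr
  have hsum : ∑ k ∈ Icc 1 n, (-1:ℝ)^k * cc n k = -(1/2) := by linarith
  have : ∑ k ∈ Icc 1 n, cc n k * (-1:ℝ)^(k-1) = -∑ k ∈ Icc 1 n, (-1:ℝ)^k * cc n k := by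
    rw [← Finset.sum_neg_distrib]
    refine sum_congr rfl fun k hk => ?_
    obtain ⟨hk1, -⟩ := mem_Icc.mp hk
    obtain ⟨j, rfl⟩ := Nat.exists_eq_add_of_le hk1
    simp [pow_succ]
    ring
  rw [this, hsum]; norm_num

theorem stmt18 (n a : ℕ) (hn : 1 ≤ n) :
    HstarO (List.replicate a 2) n
    = 2 * ∑ k ∈ Finset.Icc 1 n,
        ((n.choose k : ℝ) / ((n + k).choose n)) * (-1 : ℝ) ^ (k - 1) / (k : ℝ) ^ (2 * a) := by
  induction a generalizing n with
  | zero =>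
      simp only [List.replicate, HstarO, Nat.mul_zero, pow_zero, div_one]
      rw [show (2:ℝ) * ∑ k ∈ Icc 1 n, ((n.choose k : ℝ) / ((n + k).choose n)) * (-1:ℝ)^(k-1)
          = 2 * ∑ k ∈ Icc 1 n, cc n k * (-1:ℝ)^(k-1) from rfl, lemA n hn]
      norm_num
  | succ a ih =>
      have h1 : HstarO (List.replicate (a+1) 2) n
          = ∑ j ∈ Icc 1 n, (1:ℝ)/(j:ℝ)^2 * HstarO (List.replicate a 2) j := by
        rw [List.replicate_succ, HstarO]
      rw [h1]
      have h2 : ∀ j ∈ Icc 1 n, (1:ℝ)/(j:ℝ)^2 * HstarO (List.replicate a 2) j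
          = ∑ k ∈ Icc 1 j, 2 * (cc j k / (j:ℝ)^2) * ((-1:ℝ)^(k-1) / (k:ℝ)^(2*a)) := by
        intro j hj
        obtain ⟨hj1, -⟩ := mem_Icc.mp hj
        rw [ih j hj1, Finset.mul_sum]
        rw [show (2:ℝ) = 2 from rfl]
        rw [Finset.mul_sum]
        refine sum_congr rfl fun k hk => ?_
        show (1:ℝ)/(j:ℝ)^2 * (2 * (cc j k * (-1:ℝ)^(k-1) / (k:ℝ)^(2*a)))
            = 2 * (cc j k / (j:ℝ)^2) * ((-1:ℝ)^(k-1) / (k:ℝ)^(2*a))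
        ring
      rw [Finset.sum_congr rfl h2]
      rw [Finset.sum_comm' (s := Icc 1 n) (t := fun j => Icc 1 j)
        (t' := Icc 1 n) (s' := fun k => Icc k n)
        (by intro j k; simp only [mem_Icc]; omega)]
      rw [Finset.mul_sum]
      refine sum_congr rfl fun k hk => ?_
      obtain ⟨hk1, hkn⟩ := mem_Icc.mp hk
      have hinner : ∑ j ∈ Icc k n, 2 * (cc j k / (j:ℝ)^2) * ((-1:ℝ)^(k-1) / (k:ℝ)^(2*a))
          = 2 * ((-1:ℝ)^(k-1) / (k:ℝ)^(2*a)) * (cc n k / (k:ℝ)^2) := by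
        rw [← lemB k hk1 n hkn, Finset.mul_sum]
        refine sum_congr rfl fun j hj => ?_
        ring
      rw [hinner]
      have hkpos : (0:ℝ) < (k:ℝ) := by exact_mod_cast hk1
      show 2 * ((-1:ℝ)^(k-1) / (k:ℝ)^(2*a)) * (cc n k / (k:ℝ)^2)
          = 2 * (cc n k * (-1:ℝ)^(k-1) / (k:ℝ)^(2*(a+1)))
      rw [show 2*(a+1) = 2*a + 2 by ring, pow_add]
      field_simp
end
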